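/- arXiv:2501.12711 — 8 statements merged into one kernel-verified Lean document; each statement's English description precedes it below -/
import Mathlib

section
/- Let I be a set and let {f_i : D → D_i}_{i∈I} be a family of coproduct-preserving tt-functors between tt-categories with small coproducts such that each f_i admits a coproduct-preserving triangulated right adjoint g_i and each adjunction f_i ⊣ g_i satisfies the projection formula. Assume that the monoidal unit 1_D belongs to Loc^⊗(∐_{i∈I} g_i(1_{D_i})). Then for every object x of D one has Loc^⊗(x) = Loc^⊗(∐_{i∈I} g_i(f_i(x))); equivalently, x ∈ Loc^⊗(∐_{i∈I} g_i(f_i(x))) and ∐_{i∈I} g_i(f_i(x)) ∈ Loc^⊗(x). -/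
open CategoryTheory Limits Pretriangulated MonoidalCategory

universe w v u v' u' v'' u''

section LocDefs

variable {C : Type u} [Category.{v} C] [HasZeroObject C] [HasShift C ℤ] [Preadditive C]
  [∀ n : ℤ, (shiftFunctor C n).Additive] [Pretriangulated C]

/-- A class of objects of a pretriangulated category is *localizing* if it is closed under
isomorphisms, shifts in both directions, extensions (if two terms of a distinguished triangle
lie in the class, so does the third) and all existing small coproducts. -/
structure IsLocalizing (P : Set C) : Prop where
  of_iso : ∀ {x y : C}, (x ≅ y) → x ∈ P → y ∈ P
  shift : ∀ (n : ℤ) {x : C}, x ∈ P → (shiftFunctor C n).obj x ∈ P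
  ext₃ : ∀ T ∈ distTriang C, Triangle.obj₁ T ∈ P → Triangle.obj₂ T ∈ P → Triangle.obj₃ T ∈ P
  ext₂ : ∀ T ∈ distTriang C, Triangle.obj₁ T ∈ P → Triangle.obj₃ T ∈ P → Triangle.obj₂ T ∈ P
  ext₁ : ∀ T ∈ distTriang C, Triangle.obj₂ T ∈ P → Triangle.obj₃ T ∈ P → Triangle.obj₁ T ∈ P
  coprod : ∀ {J : Type w} (f : J → C) [HasCoproduct f], (∀ j, f j ∈ P) → (∐ f) ∈ P

/-- A localizing class of objects is a *localizing tensor-ideal class* if it is moreover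
closed under tensoring with arbitrary objects. -/
structure IsLocalizingTensorIdeal [MonoidalCategory C] (P : Set C) extends
    IsLocalizing.{w} P : Prop where
  tensor : ∀ (a : C) {x : C}, x ∈ P → (a ⊗ x) ∈ P

/-- `x` belongs to the localizing subcategory `Loc(S)` generated by `S`: every localizing
class containing `S` contains `x`. -/
def LocMem (S : Set C) (x : C) : Prop :=
  ∀ P : Set C, IsLocalizing.{w} P → S ⊆ P → x ∈ P

/-- `x` belongs to the localizing tensor-ideal `Loc^⊗(S)` generated by `S`: every localizing
tensor-ideal class containing `S` contains `x`. -/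
def LocTensorMem [MonoidalCategory C] (S : Set C) (x : C) : Prop :=
  ∀ P : Set C, IsLocalizingTensorIdeal.{w} P → S ⊆ P → x ∈ P

end LocDefs

/-- Let `{f i : D ⥤ Di i}` be a family of coproduct-preserving tt-functors between
tt-categories with small coproducts, such that each `f i` admits a coproduct-preserving
triangulated right adjoint `g i` satisfying the projection formula. If the monoidal unit
`𝟙_ D` lies in `Loc^⊗(∐ᵢ (g i).obj (𝟙_ (Di i)))`, then for every object `x` of `D` one has
`Loc^⊗(x) = Loc^⊗(∐ᵢ (g i).obj ((f i).obj x))`, i.e. each generator belongs to the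
localizing tensor-ideal generated by the other. -/
theorem locTensor_eq_locTensor_coprod_of_unit_mem
    {I : Type w}
    -- `D` is a tt-category with small coproducts
    {D : Type u} [Category.{v} D] [HasZeroObject D] [HasShift D ℤ] [Preadditive D]
    [∀ n : ℤ, (shiftFunctor D n).Additive] [Pretriangulated D]
    [MonoidalCategory D] [SymmetricCategory D] [HasCoproducts.{w} D]
    [∀ a : D, (tensorLeft a).CommShift ℤ] [∀ a : D, (tensorLeft a).IsTriangulated]
    [∀ (a : D) (J : Type w), PreservesColimitsOfShape (Discrete J) (tensorLeft a)]
    -- each `Di i` is a tt-category with small coproducts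
    {Di : I → Type u'} [∀ i, Category.{v'} (Di i)] [∀ i, HasZeroObject (Di i)]
    [∀ i, HasShift (Di i) ℤ] [∀ i, Preadditive (Di i)]
    [∀ (i : I) (n : ℤ), (shiftFunctor (Di i) n).Additive] [∀ i, Pretriangulated (Di i)]
    [∀ i, MonoidalCategory (Di i)] [∀ i, SymmetricCategory (Di i)]
    [∀ i, HasCoproducts.{w} (Di i)]
    [∀ (i : I) (a : Di i), (tensorLeft a).CommShift ℤ]
    [∀ (i : I) (a : Di i), (tensorLeft a).IsTriangulated]
    [∀ (i : I) (a : Di i) (J : Type w), PreservesColimitsOfShape (Discrete J) (tensorLeft a)]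
    -- the `f i` are coproduct-preserving tt-functors
    (f : ∀ i, D ⥤ Di i)
    [∀ i, (f i).Additive] [∀ i, (f i).CommShift ℤ] [∀ i, (f i).IsTriangulated]
    [∀ i, (f i).Monoidal]
    [∀ (i : I) (J : Type w), PreservesColimitsOfShape (Discrete J) (f i)]
    -- the `g i` are coproduct-preserving triangulated right adjoints of the `f i`
    (g : ∀ i, Di i ⥤ D)
    [∀ i, (g i).Additive] [∀ i, (g i).CommShift ℤ] [∀ i, (g i).IsTriangulated]
    [∀ (i : I) (J : Type w), PreservesColimitsOfShape (Discrete J) (g i)]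
    (adj : ∀ i, f i ⊣ g i)
    -- the projection formula holds for each adjunction `f i ⊣ g i`
    (proj : ∀ (i : I) (x : D) (y : Di i),
      Nonempty ((g i).obj ((f i).obj x ⊗ y) ≅ x ⊗ (g i).obj y))
    -- the unit is built from the `(g i).obj (𝟙_ (Di i))`
    (hunit : LocTensorMem.{w} {∐ fun i => (g i).obj (𝟙_ (Di i))} (𝟙_ D))
    (x : D) :
    LocTensorMem.{w} {x} (∐ fun i => (g i).obj ((f i).obj x)) ∧
      LocTensorMem.{w} {∐ fun i => (g i).obj ((f i).obj x)} x := by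
  constructor
  · -- `∐ g i (f i x) ∈ Loc^⊗(x)`
    intro P hP hS
    have hx : x ∈ P := hS rfl
    refine hP.coprod _ (fun i => ?_)
    -- `g i (f i x) ≅ x ⊗ g i 𝟙 ≅ g i 𝟙 ⊗ x ∈ P`
    have e1 : (g i).obj ((f i).obj x) ≅ x ⊗ (g i).obj (𝟙_ (Di i)) :=
      ((g i).mapIso (ρ_ ((f i).obj x))).symm ≪≫ (proj i x (𝟙_ (Di i))).some
    exact hP.of_iso ((β_ _ _).symm ≪≫ e1.symm) (hP.tensor ((g i).obj (𝟙_ (Di i))) hx)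
  · -- `x ∈ Loc^⊗(∐ g i (f i x))`
    intro P hP hS
    have hgen : (∐ fun i => (g i).obj ((f i).obj x)) ∈ P := hS rfl
    -- consider `Q = { y | x ⊗ y ∈ P }`
    set Q : Set D := {y | x ⊗ y ∈ P} with hQ
    have hQloc : IsLocalizingTensorIdeal.{w} Q := by
      constructor
      constructor
      · intro a b e ha
        exact hP.of_iso ((tensorLeft x).mapIso e) ha
      · intro n a ha
        exact hP.of_iso (((tensorLeft x).commShiftIso n).symm.app a) (hP.shift n ha)
      · intro T hT h1 h2
        exact hP.ext₃ _ ((tensorLeft x).map_distinguished T hT) h1 h2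
      · intro T hT h1 h3
        exact hP.ext₂ _ ((tensorLeft x).map_distinguished T hT) h1 h3
      · intro T hT h2 h3
        exact hP.ext₁ _ ((tensorLeft x).map_distinguished T hT) h2 h3
      · intro J φ _ hφ
        exact hP.of_iso (PreservesCoproduct.iso (tensorLeft x) φ).symm
          (hP.coprod _ hφ)
      · intro a y hy
        have : a ⊗ (x ⊗ y) ∈ P := hP.tensor a hy
        exact hP.of_iso ((α_ x a y).symm ≪≫
          whiskerRightIso (β_ x a) y ≪≫ α_ a x y).symm this
    -- `∐ g i 𝟙 ∈ Q`
    have hgenQ : (∐ fun i => (g i).obj (𝟙_ (Di i))) ∈ Q := by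
      have e : (x ⊗ ∐ fun i => (g i).obj (𝟙_ (Di i))) ≅
          ∐ fun i => (g i).obj ((f i).obj x) :=
        PreservesCoproduct.iso (tensorLeft x) _ ≪≫
          Sigma.mapIso (fun i => (proj i x (𝟙_ (Di i))).some.symm ≪≫
            (g i).mapIso (ρ_ ((f i).obj x)))
      exact hP.of_iso e.symm hgen
    have hunitQ : 𝟙_ D ∈ Q := hunit Q hQloc (by
      intro y hy; cases hy; exact hgenQ)
    exact hP.of_iso (ρ_ x) hunitQ
end

section
/- (Detection) Let I be a set and let {f_i : D → D_i}_{i∈I} be a family of coproduct-preserving tt-functors between tt-categories with small coproducts such that each f_i admits a coproduct-preserving triangulated right adjoint g_i and each adjunction f_i ⊣ g_i satisfies the projection formula. Assume that the monoidal unit 1_D belongs to Loc^⊗(∐_{i∈I} g_i(1_{D_i})). If x is an object of D with f_i(x) ≅ 0 for every i ∈ I, then x ≅ 0. -/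
open CategoryTheory Limits Pretriangulated MonoidalCategory

universe w v u v' u' v'' u''

/-- Auxiliary: a coproduct of zero objects is zero. -/
lemma isZero_sigma_aux {D : Type*} [Category D] [Preadditive D] {J : Type*}
    (f : J → D) [HasCoproduct f] (h : ∀ j, IsZero (f j)) : IsZero (∐ f) := by
  rw [IsZero.iff_id_eq_zero]
  apply colimit.hom_ext
  intro j
  apply (h j.as).eq_of_src

/-- Let `{f i : D ⥤ Di i}` be a family of coproduct-preserving tt-functors between
tt-categories with small coproducts, such that each `f i` admits a coproduct-preserving
triangulated right adjoint `g i` satisfying the projection formula. If the monoidal unit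
`𝟙_ D` lies in `Loc^⊗(∐ᵢ (g i).obj (𝟙_ (Di i)))`, then for every object `x` of `D` one has
(Detection) if `(f i).obj x ≅ 0` for all `i`, then `x ≅ 0`. -/
theorem detection_of_unit_mem
    {I : Type w}
    -- `D` is a tt-category with small coproducts
    {D : Type u} [Category.{v} D] [HasZeroObject D] [HasShift D ℤ] [Preadditive D]
    [∀ n : ℤ, (shiftFunctor D n).Additive] [Pretriangulated D]
    [MonoidalCategory D] [SymmetricCategory D] [HasCoproducts.{w} D]
    [∀ a : D, (tensorLeft a).CommShift ℤ] [∀ a : D, (tensorLeft a).IsTriangulated]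
    [∀ (a : D) (J : Type w), PreservesColimitsOfShape (Discrete J) (tensorLeft a)]
    -- each `Di i` is a tt-category with small coproducts
    {Di : I → Type u'} [∀ i, Category.{v'} (Di i)] [∀ i, HasZeroObject (Di i)]
    [∀ i, HasShift (Di i) ℤ] [∀ i, Preadditive (Di i)]
    [∀ (i : I) (n : ℤ), (shiftFunctor (Di i) n).Additive] [∀ i, Pretriangulated (Di i)]
    [∀ i, MonoidalCategory (Di i)] [∀ i, SymmetricCategory (Di i)]
    [∀ i, HasCoproducts.{w} (Di i)]
    [∀ (i : I) (a : Di i), (tensorLeft a).CommShift ℤ]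
    [∀ (i : I) (a : Di i), (tensorLeft a).IsTriangulated]
    [∀ (i : I) (a : Di i) (J : Type w), PreservesColimitsOfShape (Discrete J) (tensorLeft a)]
    -- the `f i` are coproduct-preserving tt-functors
    (f : ∀ i, D ⥤ Di i)
    [∀ i, (f i).Additive] [∀ i, (f i).CommShift ℤ] [∀ i, (f i).IsTriangulated]
    [∀ i, (f i).Monoidal]
    [∀ (i : I) (J : Type w), PreservesColimitsOfShape (Discrete J) (f i)]
    -- the `g i` are coproduct-preserving triangulated right adjoints of the `f i`
    (g : ∀ i, Di i ⥤ D)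
    [∀ i, (g i).Additive] [∀ i, (g i).CommShift ℤ] [∀ i, (g i).IsTriangulated]
    [∀ (i : I) (J : Type w), PreservesColimitsOfShape (Discrete J) (g i)]
    (adj : ∀ i, f i ⊣ g i)
    -- the projection formula holds for each adjunction `f i ⊣ g i`
    (proj : ∀ (i : I) (x : D) (y : Di i),
      Nonempty ((g i).obj ((f i).obj x ⊗ y) ≅ x ⊗ (g i).obj y))
    -- the unit is built from the `(g i).obj (𝟙_ (Di i))`
    (hunit : LocTensorMem.{w} {∐ fun i => (g i).obj (𝟙_ (Di i))} (𝟙_ D))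
    (x : D) (hx : ∀ i, IsZero ((f i).obj x)) :
    IsZero x := by
  -- consider the class of objects `y` with `x ⊗ y ≅ 0`
  let P : Set D := {y | IsZero (x ⊗ y)}
  have hP : IsLocalizingTensorIdeal.{w} P :=
    { of_iso := fun {y z} e hy => hy.of_iso ((tensorLeft x).mapIso e).symm
      shift := fun n {y} hy =>
        ((shiftFunctor D n).map_isZero hy).of_iso
          (((tensorLeft x).commShiftIso n).app y)
      ext₃ := fun T hT h₁ h₂ =>
        Triangle.isZero₃_of_isZero₁₂ _ ((tensorLeft x).map_distinguished T hT) h₁ h₂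
      ext₂ := fun T hT h₁ h₃ =>
        Triangle.isZero₂_of_isZero₁₃ _ ((tensorLeft x).map_distinguished T hT) h₁ h₃
      ext₁ := fun T hT h₂ h₃ =>
        Triangle.isZero₁_of_isZero₂₃ _ ((tensorLeft x).map_distinguished T hT) h₂ h₃
      coprod := fun {J} c _ hc =>
        (isZero_sigma_aux (fun j => x ⊗ c j) hc).of_iso
          (PreservesCoproduct.iso (tensorLeft x) c)
      tensor := fun a {y} hy =>
        ((tensorLeft a).map_isZero hy).of_iso
          ((α_ x a y).symm ≪≫ whiskerRightIso (β_ x a) y ≪≫ α_ a x y) }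
  have hgen : (∐ fun i => (g i).obj (𝟙_ (Di i))) ∈ P := by
    have hterm : ∀ i, IsZero (x ⊗ (g i).obj (𝟙_ (Di i))) := fun i =>
      ((g i).map_isZero ((hx i).of_iso (ρ_ ((f i).obj x)))).of_iso
        (proj i x (𝟙_ (Di i))).some.symm
    exact (isZero_sigma_aux (fun i => x ⊗ (g i).obj (𝟙_ (Di i))) hterm).of_iso
      (PreservesCoproduct.iso (tensorLeft x) (fun i => (g i).obj (𝟙_ (Di i))))
  have h1 : IsZero (x ⊗ 𝟙_ D) := hunit P hP (by
    intro y hy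
    simpa [Set.mem_singleton_iff.mp hy] using hgen)
  exact h1.of_iso (ρ_ x).symm
end

section
/- (Building) Let I be a set and let {f_i : D → D_i}_{i∈I} be a family of coproduct-preserving tt-functors between tt-categories with small coproducts such that each f_i admits a coproduct-preserving triangulated right adjoint g_i and each adjunction f_i ⊣ g_i satisfies the projection formula. Assume that the monoidal unit 1_D belongs to Loc^⊗(∐_{i∈I} g_i(1_{D_i})). Then for any objects x and y of D, one has x ∈ Loc^⊗(y) if and only if f_i(x) ∈ Loc^⊗(f_i(y)) for all i ∈ I. -/
open CategoryTheory Limits Pretriangulated MonoidalCategory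

universe w v u v' u' v'' u''

section Aux

set_option linter.unusedSectionVars false

variable {C : Type u} [Category.{v} C] [HasZeroObject C] [HasShift C ℤ] [Preadditive C]
  [∀ n : ℤ, (shiftFunctor C n).Additive] [Pretriangulated C] [MonoidalCategory C]

theorem locTensorMem_isIdeal (S : Set C) :
    IsLocalizingTensorIdeal.{w} {z : C | LocTensorMem.{w} S z} := by
  refine ⟨⟨?_, ?_, ?_, ?_, ?_, ?_⟩, ?_⟩
  · exact fun e hx P hP hS => hP.of_iso e (hx P hP hS)
  · exact fun n {x} hx P hP hS => hP.shift n (hx P hP hS)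
  · exact fun T hT h1 h2 P hP hS => hP.ext₃ T hT (h1 P hP hS) (h2 P hP hS)
  · exact fun T hT h1 h2 P hP hS => hP.ext₂ T hT (h1 P hP hS) (h2 P hP hS)
  · exact fun T hT h1 h2 P hP hS => hP.ext₁ T hT (h1 P hP hS) (h2 P hP hS)
  · intro J f _ h P hP hS
    exact hP.coprod f (fun j => h j P hP hS)
  · exact fun a {x} hx P hP hS => hP.tensor a (hx P hP hS)

theorem locTensorMem_self {S : Set C} {x : C} (hx : x ∈ S) : LocTensorMem.{w} S x :=
  fun _ _ hS => hS hx

theorem isLocalizing_pullback {C' : Type u''} [Category.{v''} C'] [HasZeroObject C']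
    [HasShift C' ℤ] [Preadditive C'] [∀ n : ℤ, (shiftFunctor C' n).Additive]
    [Pretriangulated C'] [HasCoproducts.{w} C']
    (F : C ⥤ C') [F.CommShift ℤ] [F.IsTriangulated]
    [∀ J : Type w, PreservesColimitsOfShape (Discrete J) F]
    {P : Set C'} (hP : IsLocalizing.{w} P) :
    IsLocalizing.{w} {z : C | F.obj z ∈ P} := by
  refine ⟨?_, ?_, ?_, ?_, ?_, ?_⟩
  · exact fun e hx => hP.of_iso (F.mapIso e) hx
  · exact fun n {z} hz => hP.of_iso ((F.commShiftIso n).app z).symm (hP.shift n hz)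
  · exact fun T hT h1 h2 => hP.ext₃ _ (F.map_distinguished T hT) h1 h2
  · exact fun T hT h1 h2 => hP.ext₂ _ (F.map_distinguished T hT) h1 h2
  · exact fun T hT h1 h2 => hP.ext₁ _ (F.map_distinguished T hT) h1 h2
  · intro J f _ h
    exact hP.of_iso (PreservesCoproduct.iso F f).symm (hP.coprod _ (fun j => h j))

theorem isLocalizingTensorIdeal_pullback {C' : Type u''} [Category.{v''} C'] [HasZeroObject C']
    [HasShift C' ℤ] [Preadditive C'] [∀ n : ℤ, (shiftFunctor C' n).Additive]
    [Pretriangulated C'] [MonoidalCategory C'] [HasCoproducts.{w} C']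
    (F : C ⥤ C') [F.CommShift ℤ] [F.IsTriangulated] [F.Monoidal]
    [∀ J : Type w, PreservesColimitsOfShape (Discrete J) F]
    {P : Set C'} (hP : IsLocalizingTensorIdeal.{w} P) :
    IsLocalizingTensorIdeal.{w} {z : C | F.obj z ∈ P} := by
  refine ⟨isLocalizing_pullback.{w} F hP.toIsLocalizing, ?_⟩
  exact fun a {z} hz => hP.of_iso (Functor.Monoidal.μIso F a z) (hP.tensor (F.obj a) hz)

end Aux


/-- Let `{f i : D ⥤ Di i}` be a family of coproduct-preserving tt-functors between
tt-categories with small coproducts, such that each `f i` admits a coproduct-preserving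
triangulated right adjoint `g i` satisfying the projection formula. If the monoidal unit
`𝟙_ D` lies in `Loc^⊗(∐ᵢ (g i).obj (𝟙_ (Di i)))`, then for every object `x` of `D` one has
(Building) for any objects `x`, `y` of `D`, one has `x ∈ Loc^⊗(y)` if and only if
`(f i).obj x ∈ Loc^⊗((f i).obj y)` for all `i`. -/
theorem building_of_unit_mem
    {I : Type w}
    -- `D` is a tt-category with small coproducts
    {D : Type u} [Category.{v} D] [HasZeroObject D] [HasShift D ℤ] [Preadditive D]
    [∀ n : ℤ, (shiftFunctor D n).Additive] [Pretriangulated D]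
    [MonoidalCategory D] [SymmetricCategory D] [HasCoproducts.{w} D]
    [∀ a : D, (tensorLeft a).CommShift ℤ] [∀ a : D, (tensorLeft a).IsTriangulated]
    [∀ (a : D) (J : Type w), PreservesColimitsOfShape (Discrete J) (tensorLeft a)]
    -- each `Di i` is a tt-category with small coproducts
    {Di : I → Type u'} [∀ i, Category.{v'} (Di i)] [∀ i, HasZeroObject (Di i)]
    [∀ i, HasShift (Di i) ℤ] [∀ i, Preadditive (Di i)]
    [∀ (i : I) (n : ℤ), (shiftFunctor (Di i) n).Additive] [∀ i, Pretriangulated (Di i)]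
    [∀ i, MonoidalCategory (Di i)] [∀ i, SymmetricCategory (Di i)]
    [∀ i, HasCoproducts.{w} (Di i)]
    [∀ (i : I) (a : Di i), (tensorLeft a).CommShift ℤ]
    [∀ (i : I) (a : Di i), (tensorLeft a).IsTriangulated]
    [∀ (i : I) (a : Di i) (J : Type w), PreservesColimitsOfShape (Discrete J) (tensorLeft a)]
    -- the `f i` are coproduct-preserving tt-functors
    (f : ∀ i, D ⥤ Di i)
    [∀ i, (f i).Additive] [∀ i, (f i).CommShift ℤ] [∀ i, (f i).IsTriangulated]
    [∀ i, (f i).Monoidal]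
    [∀ (i : I) (J : Type w), PreservesColimitsOfShape (Discrete J) (f i)]
    -- the `g i` are coproduct-preserving triangulated right adjoints of the `f i`
    (g : ∀ i, Di i ⥤ D)
    [∀ i, (g i).Additive] [∀ i, (g i).CommShift ℤ] [∀ i, (g i).IsTriangulated]
    [∀ (i : I) (J : Type w), PreservesColimitsOfShape (Discrete J) (g i)]
    (adj : ∀ i, f i ⊣ g i)
    -- the projection formula holds for each adjunction `f i ⊣ g i`
    (proj : ∀ (i : I) (x : D) (y : Di i),
      Nonempty ((g i).obj ((f i).obj x ⊗ y) ≅ x ⊗ (g i).obj y))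
    -- the unit is built from the `(g i).obj (𝟙_ (Di i))`
    (hunit : LocTensorMem.{w} {∐ fun i => (g i).obj (𝟙_ (Di i))} (𝟙_ D))
    (x y : D) :
    LocTensorMem.{w} {y} x ↔ ∀ i, LocTensorMem.{w} {(f i).obj y} ((f i).obj x) := by
  constructor
  · intro hx i
    exact hx _ (isLocalizingTensorIdeal_pullback (f i)
        (locTensorMem_isIdeal {(f i).obj y}))
      (Set.singleton_subset_iff.mpr (locTensorMem_self (Set.mem_singleton _)))
  · intro h
    have hLTy : IsLocalizingTensorIdeal.{w} {d : D | LocTensorMem.{w} {y} d} :=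
      locTensorMem_isIdeal _
    have step1 : ∀ i, LocTensorMem.{w} {y} (x ⊗ (g i).obj (𝟙_ (Di i))) := by
      intro i
      have hpull : ∀ a : Di i,
          IsLocalizing.{w} {w : Di i | LocTensorMem.{w} {y} ((g i).obj (a ⊗ w))} := fun a =>
        isLocalizing_pullback (tensorLeft a ⋙ g i) hLTy.toIsLocalizing
      have hR : IsLocalizingTensorIdeal.{w}
          {w : Di i | ∀ a : Di i, LocTensorMem.{w} {y} ((g i).obj (a ⊗ w))} := by
        refine ⟨⟨?_, ?_, ?_, ?_, ?_, ?_⟩, ?_⟩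
        · exact fun e hw a => (hpull a).of_iso e (hw a)
        · exact fun n {w} hw a => (hpull a).shift n (hw a)
        · exact fun T hT h1 h2 a => (hpull a).ext₃ T hT (h1 a) (h2 a)
        · exact fun T hT h1 h2 a => (hpull a).ext₂ T hT (h1 a) (h2 a)
        · exact fun T hT h1 h2 a => (hpull a).ext₁ T hT (h1 a) (h2 a)
        · intro J fj _ hf a
          exact (hpull a).coprod fj (fun j => hf j a)
        · intro b w hw a
          exact hLTy.of_iso ((g i).mapIso (α_ a b w)) (hw (a ⊗ b))
      have hfy : (f i).obj y ∈
          {w : Di i | ∀ a : Di i, LocTensorMem.{w} {y} ((g i).obj (a ⊗ w))} := by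
        intro a
        have h1 : LocTensorMem.{w} {y} ((g i).obj a ⊗ y) :=
          hLTy.tensor ((g i).obj a) (locTensorMem_self (Set.mem_singleton _))
        have h2 := hLTy.of_iso (β_ ((g i).obj a) y) h1
        have h3 := hLTy.of_iso (proj i y a).some.symm h2
        exact hLTy.of_iso ((g i).mapIso (β_ ((f i).obj y) a)) h3
      have hfx := h i _ hR (Set.singleton_subset_iff.mpr hfy)
      have h4 := hfx (𝟙_ (Di i))
      have h5 := hLTy.of_iso ((g i).mapIso (β_ (𝟙_ (Di i)) ((f i).obj x))) h4
      exact hLTy.of_iso (proj i x (𝟙_ (Di i))).some h5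
    have hQ : IsLocalizingTensorIdeal.{w} {z : D | LocTensorMem.{w} {y} (x ⊗ z)} := by
      refine ⟨isLocalizing_pullback (tensorLeft x) hLTy.toIsLocalizing, ?_⟩
      intro a z hz
      exact hLTy.of_iso ((α_ a x z).symm ≪≫ whiskerRightIso (β_ a x) z ≪≫ α_ x a z)
        (hLTy.tensor a hz)
    have hc : (∐ fun i => (g i).obj (𝟙_ (Di i))) ∈ {z : D | LocTensorMem.{w} {y} (x ⊗ z)} :=
      hQ.coprod _ step1
    have hu := hunit _ hQ (Set.singleton_subset_iff.mpr hc)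
    exact hLTy.of_iso (ρ_ x) hu
end

section
/- (Descending building) Let I be a set. Suppose given tt-categories with small coproducts D, T and, for each i ∈ I, D_i and T_i, together with coproduct-preserving tt-functors τ : D → T, τ_i : D_i → T_i, f_i : D → D_i, and g_i : T → T_i such that τ_i ∘ f_i is naturally isomorphic to g_i ∘ τ for every i. Suppose each f_i has a right adjoint u_i and each g_i has a right adjoint v_i, and assume: (1) v_i(τ_i(1_{D_i})) ≅ τ(u_i(1_{D_i})) for every i ∈ I (the square is horizontally right adjointable at the monoidal unit); (2) 1_D ∈ Loc^⊗(∐_{i∈I} u_i(1_{D_i})). Then 1_T ∈ Loc^⊗(∐_{i∈I} v_i(1_{T_i})). -/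
open CategoryTheory Limits Pretriangulated MonoidalCategory

universe w v u v' u' v'' u''

/-- (Descending building) Given coproduct-preserving tt-functors `τ : D ⥤ T`,
`τi i : Di i ⥤ Ti i`, `f i : D ⥤ Di i` and `g i : T ⥤ Ti i` between tt-categories with
small coproducts with `τi i ∘ f i ≅ g i ∘ τ` for every `i`, right adjoints `u i` of `f i`
and `v i` of `g i`, such that (1) each square is horizontally right adjointable at the
monoidal unit and (2) `𝟙_ D ∈ Loc^⊗(∐ᵢ (u i).obj (𝟙_ (Di i)))`, one has
`𝟙_ T ∈ Loc^⊗(∐ᵢ (v i).obj (𝟙_ (Ti i)))`. -/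
theorem descending_building
    {I : Type w}
    -- `D` is a tt-category with small coproducts
    {D : Type u} [Category.{v} D] [HasZeroObject D] [HasShift D ℤ] [Preadditive D]
    [∀ n : ℤ, (shiftFunctor D n).Additive] [Pretriangulated D]
    [MonoidalCategory D] [SymmetricCategory D] [HasCoproducts.{w} D]
    [∀ a : D, (tensorLeft a).CommShift ℤ] [∀ a : D, (tensorLeft a).IsTriangulated]
    [∀ (a : D) (J : Type w), PreservesColimitsOfShape (Discrete J) (tensorLeft a)]
    -- `T` is a tt-category with small coproducts
    {T : Type u'} [Category.{v'} T] [HasZeroObject T] [HasShift T ℤ] [Preadditive T]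
    [∀ n : ℤ, (shiftFunctor T n).Additive] [Pretriangulated T]
    [MonoidalCategory T] [SymmetricCategory T] [HasCoproducts.{w} T]
    [∀ a : T, (tensorLeft a).CommShift ℤ] [∀ a : T, (tensorLeft a).IsTriangulated]
    [∀ (a : T) (J : Type w), PreservesColimitsOfShape (Discrete J) (tensorLeft a)]
    -- each `Di i` is a tt-category with small coproducts
    {Di : I → Type u''} [∀ i, Category.{v''} (Di i)] [∀ i, HasZeroObject (Di i)]
    [∀ i, HasShift (Di i) ℤ] [∀ i, Preadditive (Di i)]
    [∀ (i : I) (n : ℤ), (shiftFunctor (Di i) n).Additive] [∀ i, Pretriangulated (Di i)]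
    [∀ i, MonoidalCategory (Di i)] [∀ i, SymmetricCategory (Di i)]
    [∀ i, HasCoproducts.{w} (Di i)]
    [∀ (i : I) (a : Di i), (tensorLeft a).CommShift ℤ]
    [∀ (i : I) (a : Di i), (tensorLeft a).IsTriangulated]
    [∀ (i : I) (a : Di i) (J : Type w), PreservesColimitsOfShape (Discrete J) (tensorLeft a)]
    -- each `Ti i` is a tt-category with small coproducts
    {Ti : I → Type u''} [∀ i, Category.{v''} (Ti i)] [∀ i, HasZeroObject (Ti i)]
    [∀ i, HasShift (Ti i) ℤ] [∀ i, Preadditive (Ti i)]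
    [∀ (i : I) (n : ℤ), (shiftFunctor (Ti i) n).Additive] [∀ i, Pretriangulated (Ti i)]
    [∀ i, MonoidalCategory (Ti i)] [∀ i, SymmetricCategory (Ti i)]
    [∀ i, HasCoproducts.{w} (Ti i)]
    [∀ (i : I) (a : Ti i), (tensorLeft a).CommShift ℤ]
    [∀ (i : I) (a : Ti i), (tensorLeft a).IsTriangulated]
    [∀ (i : I) (a : Ti i) (J : Type w), PreservesColimitsOfShape (Discrete J) (tensorLeft a)]
    -- `τ : D ⥤ T` is a coproduct-preserving tt-functor
    (τ : D ⥤ T)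
    [τ.Additive] [τ.CommShift ℤ] [τ.IsTriangulated] [τ.Monoidal]
    [∀ J : Type w, PreservesColimitsOfShape (Discrete J) τ]
    -- each `τi i : Di i ⥤ Ti i` is a coproduct-preserving tt-functor
    (τi : ∀ i, Di i ⥤ Ti i)
    [∀ i, (τi i).Additive] [∀ i, (τi i).CommShift ℤ] [∀ i, (τi i).IsTriangulated]
    [∀ i, (τi i).Monoidal]
    [∀ (i : I) (J : Type w), PreservesColimitsOfShape (Discrete J) (τi i)]
    -- each `f i : D ⥤ Di i` is a coproduct-preserving tt-functor
    (f : ∀ i, D ⥤ Di i)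
    [∀ i, (f i).Additive] [∀ i, (f i).CommShift ℤ] [∀ i, (f i).IsTriangulated]
    [∀ i, (f i).Monoidal]
    [∀ (i : I) (J : Type w), PreservesColimitsOfShape (Discrete J) (f i)]
    -- each `g i : T ⥤ Ti i` is a coproduct-preserving tt-functor
    (g : ∀ i, T ⥤ Ti i)
    [∀ i, (g i).Additive] [∀ i, (g i).CommShift ℤ] [∀ i, (g i).IsTriangulated]
    [∀ i, (g i).Monoidal]
    [∀ (i : I) (J : Type w), PreservesColimitsOfShape (Discrete J) (g i)]
    -- the squares commute: `τi i ∘ f i ≅ g i ∘ τ`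
    (sq : ∀ i, Nonempty (f i ⋙ τi i ≅ τ ⋙ g i))
    -- right adjoints
    (u : ∀ i, Di i ⥤ D) (adju : ∀ i, f i ⊣ u i)
    (v : ∀ i, Ti i ⥤ T) (adjv : ∀ i, g i ⊣ v i)
    -- (1) the squares are horizontally right adjointable at the monoidal unit
    (hadj : ∀ i, Nonempty ((v i).obj ((τi i).obj (𝟙_ (Di i))) ≅ τ.obj ((u i).obj (𝟙_ (Di i)))))
    -- (2) the family `{f i}` builds the tensor unit of `D`
    (hunit : LocTensorMem.{w} {∐ fun i => (u i).obj (𝟙_ (Di i))} (𝟙_ D)) :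
    LocTensorMem.{w} {∐ fun i => (v i).obj (𝟙_ (Ti i))} (𝟙_ T) := by
  intro Q hQ hSQ
  -- the "detection" class in `D`
  set P : Set D := {x | ∀ t : T, (t ⊗ τ.obj x) ∈ Q} with hP
  have hQS : (∐ fun i => (v i).obj (𝟙_ (Ti i))) ∈ Q := hSQ rfl
  have hPloc : IsLocalizingTensorIdeal.{w} P := by
    constructor
    · constructor
      · intro x y e hx t
        exact hQ.of_iso ((tensorLeft t).mapIso (τ.mapIso e)) (hx t)
      · intro n x hx t
        refine hQ.of_iso (Iso.symm ?_) (hQ.shift n (hx t))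
        exact (tensorLeft t).mapIso ((τ.commShiftIso n).app x) ≪≫
          ((tensorLeft t).commShiftIso n).app (τ.obj x)
      · intro Tr hTr h1 h2 t
        exact hQ.ext₃ _ ((tensorLeft t).map_distinguished _
          (τ.map_distinguished _ hTr)) (h1 t) (h2 t)
      · intro Tr hTr h1 h3 t
        exact hQ.ext₂ _ ((tensorLeft t).map_distinguished _
          (τ.map_distinguished _ hTr)) (h1 t) (h3 t)
      · intro Tr hTr h2 h3 t
        exact hQ.ext₁ _ ((tensorLeft t).map_distinguished _
          (τ.map_distinguished _ hTr)) (h2 t) (h3 t)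
      · intro J c _ hc t
        refine hQ.of_iso (Iso.symm ?_) (hQ.coprod (fun j => t ⊗ τ.obj (c j)) (fun j => hc j t))
        exact (tensorLeft t).mapIso (PreservesCoproduct.iso τ c) ≪≫
          PreservesCoproduct.iso (tensorLeft t) (fun j => τ.obj (c j))
    · intro a x hx t
      refine hQ.of_iso ?_ (hx (t ⊗ τ.obj a))
      exact α_ t (τ.obj a) (τ.obj x) ≪≫ (tensorLeft t).mapIso (Functor.Monoidal.μIso τ a x)
  have hsub : ({∐ fun i => (u i).obj (𝟙_ (Di i))} : Set D) ⊆ P := by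
    rintro x rfl t
    refine hQ.of_iso ((tensorLeft t).mapIso (Iso.symm ?_)) (hQ.tensor t hQS)
    exact PreservesCoproduct.iso τ _ ≪≫ Sigma.mapIso (fun i =>
      ((hadj i).some.symm ≪≫ (v i).mapIso (Functor.Monoidal.εIso (τi i)).symm))
  have h1 : ∀ t : T, (t ⊗ τ.obj (𝟙_ D)) ∈ Q := hunit P hPloc hsub
  refine hQ.of_iso ?_ (h1 (𝟙_ T))
  exact (tensorLeft (𝟙_ T)).mapIso (Functor.Monoidal.εIso τ).symm ≪≫ λ_ (𝟙_ T)
end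

section
/- Let R be a commutative ring and G a nontrivial finite group. For each prime p dividing the order of G, choose a Sylow p-subgroup S_p of G. Then the trivial representation R is a retract of the direct sum ⊕_{p | |G|} R[G/S_p] in the category Rep R G: there exist morphisms ι : R → ⊕_{p | |G|} R[G/S_p] and ρ : ⊕_{p | |G|} R[G/S_p] → R of R-linear G-representations with ρ ∘ ι = id. -/
open CategoryTheory Limits

universe u
open CategoryTheory Limits Finsupp
variable {R : Type u} [CommRing R] {G : Type u} [Group G]

noncomputable def myAug (X : Type u) [MulAction G X] :
    Rep.ofMulAction R G X ⟶ Rep.trivial R G R :=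
  Rep.ofHom ((Finsupp.linearCombination R (fun _ : X => (1 : R)) ∘ₗ
      (MonoidAlgebra.coeffLinearEquiv R).toLinearMap).intertwiningMap_of_isIntertwiningMap _ _
    (fun g v => by
      induction v using MonoidAlgebra.induction_linear with
      | zero => simp
      | add a b ha hb => simp only [map_add, ha, hb]
      | single x r => simp [Representation.ofMulAction_single]))

lemma mapDomain_univ_sum (X : Type u) [MulAction G X] [Fintype X] (g : G) :
    Representation.ofMulAction R G X g (∑ x : X, MonoidAlgebra.single x (1:R))
      = ∑ x : X, MonoidAlgebra.single x (1:R) := by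
  rw [map_sum]
  simp only [Representation.ofMulAction_single]
  exact Fintype.sum_equiv (MulAction.toPerm g) _ _ (fun x => rfl)

noncomputable def myCo (X : Type u) [MulAction G X] [Fintype X] :
    Rep.trivial R G R ⟶ Rep.ofMulAction R G X :=
  Rep.ofHom ((LinearMap.toSpanSingleton R _ (∑ x : X, MonoidAlgebra.single x (1 : R))).intertwiningMap_of_isIntertwiningMap _ _
    (fun g v => by
      simp only [LinearMap.toSpanSingleton_apply, map_smul, mapDomain_univ_sum]
      rfl))

lemma comp_eq (X : Type u) [MulAction G X] [Fintype X] :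
    (myCo X ≫ myAug X : Rep.trivial R G R ⟶ Rep.trivial R G R)
      = ((Fintype.card X : R) • 𝟙 _) := by
  ext1; ext1
  refine LinearMap.ext_ring ?_
  simp [myCo, myAug, Rep.smul_hom]


lemma key_comb (G : Type u) [Group G] [Finite G] [Nontrivial G]
    (S : ∀ p ∈ (Nat.card G).primeFactors, Sylow p G) :
    ∃ c : {q // q ∈ (Nat.card G).primeFactors} → ℤ,
      ∑ p : {q // q ∈ (Nat.card G).primeFactors},
        c p * ((S p.1 p.2 : Subgroup G).index : ℤ) = 1 := by
  set P := {q // q ∈ (Nat.card G).primeFactors}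
  set i : P → ℤ := fun p => ((S p.1 p.2 : Subgroup G).index : ℤ) with hi
  set I := Ideal.span (Set.range i) with hI
  set d := Submodule.IsPrincipal.generator I with hd
  have hdvd : ∀ p : P, d ∣ i p := fun p =>
    (Submodule.IsPrincipal.mem_iff_generator_dvd I).mp (Ideal.subset_span ⟨p, rfl⟩)
  have hPne : Nonempty P := by
    obtain ⟨q, hq⟩ := Nat.nonempty_primeFactors.mpr (Finite.one_lt_card (α := G))
    exact ⟨⟨q, hq⟩⟩
  obtain ⟨p₀⟩ := hPne
  have hind0 : ∀ p : P, (S p.1 p.2 : Subgroup G).index ≠ 0 :=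
    fun p => Subgroup.index_ne_zero_of_finite
  have hunit : IsUnit d := by
    rw [Int.isUnit_iff_natAbs_eq]
    by_contra hne
    obtain ⟨q, hq, hqd⟩ := Nat.exists_prime_and_dvd hne
    have hqd' : (q : ℤ) ∣ d := Int.dvd_natAbs.mp (Int.natCast_dvd_natCast.mpr hqd)
    have hqi : ∀ p : P, q ∣ (S p.1 p.2 : Subgroup G).index := fun p =>
      Int.ofNat_dvd.mp (hqd'.trans (hdvd p))
    have hqcard : q ∣ Nat.card G := (hqi p₀).trans (Subgroup.index_dvd_card _)
    have hqP : q ∈ (Nat.card G).primeFactors :=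
      Nat.mem_primeFactors.mpr ⟨hq, hqcard, Nat.card_pos.ne'⟩
    haveI : Fact q.Prime := ⟨hq⟩
    exact (S q hqP).not_dvd_index (hqi ⟨q, hqP⟩)
  have htop : (1 : ℤ) ∈ I := by
    have : I = ⊤ := by
      rw [← Ideal.span_singleton_generator I]
      exact Ideal.span_singleton_eq_top.mpr hunit
    rw [this]; exact Submodule.mem_top
  rw [hI, Ideal.span, Submodule.mem_span_range_iff_exists_fun] at htop
  obtain ⟨c, hc⟩ := htop
  exact ⟨c, by simpa only [smul_eq_mul, hi] using hc⟩


/-- Let `R` be a commutative ring and `G` a nontrivial finite group. For each prime `p`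
dividing `|G|`, choose a Sylow `p`-subgroup `S p` of `G`. Then the trivial representation `R`
is a retract of `⊕_{p ∣ |G|} R[G / S p]` in `Rep R G`. -/
theorem trivial_rep_retract_of_sum_over_sylow (R : Type u) [CommRing R]
    (G : Type u) [Group G] [Finite G] [Nontrivial G]
    (S : ∀ p ∈ (Nat.card G).primeFactors, Sylow p G) :
    ∃ (ι : Rep.trivial R G R ⟶
        ∐ fun p : {q // q ∈ (Nat.card G).primeFactors} =>
          Rep.ofMulAction R G (G ⧸ (S p.1 p.2 : Subgroup G)))
      (ρ : (∐ fun p : {q // q ∈ (Nat.card G).primeFactors} =>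
          Rep.ofMulAction R G (G ⧸ (S p.1 p.2 : Subgroup G))) ⟶ Rep.trivial R G R),
      ι ≫ ρ = 𝟙 (Rep.trivial R G R) := by
  classical
  set P := {q // q ∈ (Nat.card G).primeFactors}
  letI : ∀ p : P, Fintype (G ⧸ (S p.1 p.2 : Subgroup G)) := fun p => Fintype.ofFinite _
  obtain ⟨c, hc⟩ := key_comb G S
  set F : P → Rep R G := fun p => Rep.ofMulAction R G (G ⧸ (S p.1 p.2 : Subgroup G)) with hF
  refine ⟨∑ p : P, ((c p : R) • (myCo (G ⧸ (S p.1 p.2 : Subgroup G)) ≫ Sigma.ι F p)),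
    Sigma.desc (fun p => myAug (G ⧸ (S p.1 p.2 : Subgroup G))), ?_⟩
  rw [Preadditive.sum_comp]
  have step : ∀ p : P,
      ((c p : R) • (myCo (G ⧸ (S p.1 p.2 : Subgroup G)) ≫ Sigma.ι F p)) ≫
        Sigma.desc (fun p => myAug (G ⧸ (S p.1 p.2 : Subgroup G)))
      = ((c p : R) * ((S p.1 p.2 : Subgroup G).index : R)) • 𝟙 (Rep.trivial R G R) := by
    intro p
    rw [Linear.smul_comp, Category.assoc, colimit.ι_desc]
    show (c p : R) • (myCo _ ≫ myAug _) = _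
    rw [comp_eq, smul_smul, ← Nat.card_eq_fintype_card, ← Subgroup.index_eq_card]
  rw [Finset.sum_congr rfl (fun p _ => step p), ← Finset.sum_smul]
  have : (∑ p : P, (c p : R) * ((S p.1 p.2 : Subgroup G).index : R)) = 1 := by
    have := congrArg (fun n : ℤ => (n : R)) hc
    push_cast at this
    exact this
  rw [this, one_smul]
end

section
/- (Mackey decomposition of G-sets) Let G be a group and H, K subgroups of G. Choose for each double coset d ∈ H\G/K a representative g_d ∈ G. Then there is a bijection e : (G/H) × (G/K) ≃ Σ_{d ∈ H\G/K} G/(H ∩ g_d K g_d^{-1}) which is G-equivariant, where G acts diagonally on the product (G/H) × (G/K), on the right-hand side by its action on each coset space G/(H ∩ g_d K g_d^{-1}) (fixing the index d), and g_d K g_d^{-1} denotes the conjugate subgroup. -/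
universe u

/-- (Mackey decomposition of `G`-sets) Let `G` be a group and `H`, `K` subgroups of `G`.
Choose for every double coset `d ∈ H\G/K` a representative `g d ∈ G`. Then there is a
`G`-equivariant bijection `(G/H) × (G/K) ≃ Σ_{d ∈ H\G/K} G/(H ∩ g d • K • (g d)⁻¹)`, where
`G` acts diagonally on the product and on each coset space on the right-hand side. -/
theorem mackey_decomposition_of_G_sets (G : Type u) [Group G] (H K : Subgroup G)
    (g : DoubleCoset.Quotient (H : Set G) (K : Set G) → G)
    (hg : ∀ d, DoubleCoset.mk H K (g d) = d) :
    ∃ e : (G ⧸ H) × (G ⧸ K) ≃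
        Σ d : DoubleCoset.Quotient (H : Set G) (K : Set G),
          G ⧸ (H ⊓ Subgroup.map (MulAut.conj (g d)).toMonoidHom K),
      ∀ (s : G) (x : (G ⧸ H) × (G ⧸ K)), e (s • x) = s • e x := by
  classical
  set L : DoubleCoset.Quotient (H : Set G) (K : Set G) → Subgroup G :=
    fun d => H ⊓ Subgroup.map (MulAut.conj (g d)).toMonoidHom K with hLdef
  have memL : ∀ d (x : G), x ∈ L d ↔ x ∈ H ∧ ∃ k ∈ K, g d * k * (g d)⁻¹ = x := by
    intro d x
    simp [hLdef, Subgroup.mem_inf, Subgroup.mem_map, MulAut.conj_apply]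
  -- the map from the sigma type to the product
  have well : ∀ (d : DoubleCoset.Quotient (H : Set G) (K : Set G)) (s s' : G),
      s⁻¹ * s' ∈ L d →
      ((QuotientGroup.mk s : G ⧸ H), (QuotientGroup.mk (s * g d) : G ⧸ K)) =
        ((QuotientGroup.mk s' : G ⧸ H), (QuotientGroup.mk (s' * g d) : G ⧸ K)) := by
    intro d s s' hmem
    obtain ⟨hH, k, hk, hconj⟩ := (memL d _).mp hmem
    refine Prod.ext ?_ ?_
    · exact QuotientGroup.eq.mpr hH
    · refine QuotientGroup.eq.mpr ?_
      have : s' = s * (g d * k * (g d)⁻¹) := by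
        rw [hconj]; group
      have : (s * g d)⁻¹ * (s' * g d) = k := by
        rw [this]; group
      rw [this]; exact hk
  let ψ : (Σ d : DoubleCoset.Quotient (H : Set G) (K : Set G), G ⧸ L d) → (G ⧸ H) × (G ⧸ K) :=
    fun p => Quotient.liftOn' p.2
      (fun s => ((QuotientGroup.mk s : G ⧸ H), (QuotientGroup.mk (s * g p.1) : G ⧸ K)))
      (fun s s' h => well p.1 s s' (QuotientGroup.leftRel_apply.mp h))
  have ψ_mk : ∀ d (s : G),
      ψ ⟨d, QuotientGroup.mk s⟩ = (QuotientGroup.mk s, QuotientGroup.mk (s * g d)) :=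
    fun _ _ => rfl
  have hinj : Function.Injective ψ := by
    rintro ⟨d, q⟩ ⟨d', q'⟩ h
    induction q using QuotientGroup.induction_on with | H s =>
    induction q' using QuotientGroup.induction_on with | H s' =>
    rw [ψ_mk, ψ_mk] at h
    have h1 : s⁻¹ * s' ∈ H := QuotientGroup.eq.mp (congrArg Prod.fst h)
    have h2 : (s * g d)⁻¹ * (s' * g d') ∈ K := QuotientGroup.eq.mp (congrArg Prod.snd h)
    -- first show d = d'
    have hdd : d = d' := by
      rw [← hg d, ← hg d', DoubleCoset.eq]
      refine ⟨(s⁻¹ * s')⁻¹, H.inv_mem h1, (s * g d)⁻¹ * (s' * g d'), h2, ?_⟩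
      group
    subst hdd
    refine Sigma.ext rfl ?_
    simp only [heq_eq_eq]
    refine QuotientGroup.eq.mpr ?_
    refine (memL d _).mpr ⟨h1, (s * g d)⁻¹ * (s' * g d), h2, ?_⟩
    group
  have hsurj : Function.Surjective ψ := by
    rintro ⟨qx, qy⟩
    induction qx using QuotientGroup.induction_on with | H x =>
    induction qy using QuotientGroup.induction_on with | H y =>
    set d := DoubleCoset.mk H K (x⁻¹ * y) with hd
    obtain ⟨h, hh, k, hk, hxy⟩ := (DoubleCoset.eq H K (g d) (x⁻¹ * y)).mp (hg d)
    refine ⟨⟨d, QuotientGroup.mk (x * h)⟩, ?_⟩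
    rw [ψ_mk]
    refine Prod.ext ?_ ?_
    · exact QuotientGroup.eq.mpr (by simpa using H.inv_mem hh)
    · refine QuotientGroup.eq.mpr ?_
      have hy : y = x * (h * g d * k) := by rw [← hxy]; group
      have : (x * h * g d)⁻¹ * y = k := by rw [hy]; group
      rw [this]; exact hk
  have hequiv : ∀ (s : G) (p : Σ d, G ⧸ L d), ψ (s • p) = s • ψ p := by
    rintro s ⟨d, q⟩
    induction q using QuotientGroup.induction_on with | H t =>
    show ψ ⟨d, s • (QuotientGroup.mk t : G ⧸ L d)⟩ = s • ψ ⟨d, QuotientGroup.mk t⟩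
    rw [MulAction.Quotient.smul_mk, ψ_mk, ψ_mk]
    simp [Prod.smul_mk, MulAction.Quotient.smul_mk, smul_eq_mul, mul_assoc]
  set E := Equiv.ofBijective ψ ⟨hinj, hsurj⟩ with hE
  refine ⟨E.symm, fun s x => E.injective ?_⟩
  rw [Equiv.apply_symm_apply]
  have h2 : E (s • E.symm x) = s • E (E.symm x) := hequiv s (E.symm x)
  rw [Equiv.apply_symm_apply] at h2
  exact h2.symm
end

section
/- (Mackey formula for permutation modules) Let R be a commutative ring, G a group, and H, K subgroups of G. Choose for each double coset d ∈ H\G/K a representative g_d ∈ G. Then there is an isomorphism in Rep R G: R[G/H] ⊗ R[G/K] ≅ ⊕_{d ∈ H\G/K} R[G/(H ∩ g_d K g_d^{-1})], where the tensor product is ⊗_R with diagonal G-action and g_d K g_d^{-1} denotes the conjugate subgroup. -/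
open CategoryTheory MonoidalCategory Limits

universe u

namespace MackeyAux

variable {G : Type u} [Group G] (H K : Subgroup G)
  (g : DoubleCoset.Quotient (H : Set G) (K : Set G) → G)

/-- The stabilizer subgroup `H ⊓ g d K (g d)⁻¹`. -/
abbrev L (d : DoubleCoset.Quotient (H : Set G) (K : Set G)) : Subgroup G :=
  H ⊓ Subgroup.map (MulAut.conj (g d)).toMonoidHom K

/-- The underlying map from the sigma type to the product of quotients. -/
def toProd (x : (d : DoubleCoset.Quotient (H : Set G) (K : Set G)) × (G ⧸ L H K g d)) :
    (G ⧸ H) × (G ⧸ K) :=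
  Quotient.liftOn' x.2 (fun c => (↑c, ↑(c * g x.1))) (by
    rintro a b hab
    rw [QuotientGroup.leftRel_apply] at hab
    obtain ⟨h1, k, hk, hk2⟩ := hab
    simp only [MulEquiv.coe_toMonoidHom, MulAut.conj_apply] at hk2
    refine Prod.ext ((QuotientGroup.eq).2 h1) ((QuotientGroup.eq).2 ?_)
    have e : (a * g x.1)⁻¹ * (b * g x.1) = k := by
      rw [show (a * g x.1)⁻¹ * (b * g x.1) = (g x.1)⁻¹ * (a⁻¹ * b) * g x.1 by group, ← hk2]
      group
    exact e ▸ hk)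

theorem toProd_mk (d : DoubleCoset.Quotient (H : Set G) (K : Set G)) (c : G) :
    toProd H K g ⟨d, (c : G ⧸ L H K g d)⟩ = ((c : G ⧸ H), ((c * g d : G) : G ⧸ K)) := rfl

theorem toProd_bijective (hg : ∀ d, DoubleCoset.mk H K (g d) = d) :
    Function.Bijective (toProd H K g) := by
  constructor
  · rintro ⟨d, x⟩ ⟨d', x'⟩ hx
    induction x using Quotient.inductionOn' with | h c =>
    induction x' using Quotient.inductionOn' with | h c' =>
    rw [toProd_mk, toProd_mk, Prod.ext_iff] at hx
    obtain ⟨h1, h2⟩ := hx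
    rw [QuotientGroup.eq] at h1 h2
    have hdd : d = d' := by
      rw [← hg d, ← hg d']
      refine Quotient.sound' (DoubleCoset.rel_iff.2 ⟨(c⁻¹ * c')⁻¹, H.inv_mem h1, (c * g d)⁻¹ * (c' * g d'),
        h2, by group⟩)
    subst hdd
    refine Sigma.ext rfl (heq_of_eq (Quotient.sound' ?_))
    rw [QuotientGroup.leftRel_apply]
    refine ⟨h1, (g d)⁻¹ * (c⁻¹ * c') * g d, ?_, ?_⟩
    · have e : (g d)⁻¹ * (c⁻¹ * c') * g d = (c * g d)⁻¹ * (c' * g d) := by group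
      exact e ▸ h2
    · simp only [MulEquiv.coe_toMonoidHom, MulAut.conj_apply]
      group
  · rintro ⟨p, q⟩
    induction p using Quotient.inductionOn' with | h a =>
    induction q using Quotient.inductionOn' with | h b =>
    have hrel := Quotient.exact' (hg (DoubleCoset.mk H K (a⁻¹ * b)))
    rw [DoubleCoset.rel_iff] at hrel
    obtain ⟨h, hh, k, hk, hrel⟩ := hrel
    refine ⟨⟨DoubleCoset.mk H K (a⁻¹ * b), ((a * h : G) : G ⧸ L H K g _)⟩, ?_⟩
    rw [toProd_mk]
    refine Prod.ext (QuotientGroup.eq.2 (by simpa using H.inv_mem hh))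
      (QuotientGroup.eq.2 ?_)
    have e : (a * h * g (DoubleCoset.mk H K (a⁻¹ * b)))⁻¹ * b = k := by
      generalize g (DoubleCoset.mk H K (a⁻¹ * b)) = w at hrel ⊢
      rw [show b = a * (a⁻¹ * b) by group, hrel]
      group
    exact e ▸ hk



section CategoryPart

variable (G)

/-- The sigma type `Σ d, G ⧸ L d` as a `G`-action. -/
def sigAction : Action (Type u) (MonCat.of G) where
  V := (d : DoubleCoset.Quotient (H : Set G) (K : Set G)) × (G ⧸ L H K g d)
  ρ :=
    { toFun := fun (x : G) => TypeCat.ofHom fun (p : (d : DoubleCoset.Quotient (H : Set G) (K : Set G)) × (G ⧸ L H K g d)) => ⟨p.1, x • p.2⟩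
      map_one' := ConcreteCategory.hom_ext (C := Type u) _ _ fun p => by
        show (⟨p.1, (1 : G) • p.2⟩ : (d : DoubleCoset.Quotient (H : Set G) (K : Set G)) × (G ⧸ L H K g d)) = p
        simp
      map_mul' := fun (x y : G) => by
        refine ConcreteCategory.hom_ext (C := Type u) _ _ fun p => ?_
        show (⟨p.1, (x * y) • p.2⟩ : (d : DoubleCoset.Quotient (H : Set G) (K : Set G)) × (G ⧸ L H K g d))
          = ⟨p.1, x • y • p.2⟩
        rw [mul_smul] }

variable {G}

theorem toProd_comm (x : G) (d : DoubleCoset.Quotient (H : Set G) (K : Set G)) (q : G ⧸ L H K g d) :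
    toProd H K g ⟨d, x • q⟩ = x • toProd H K g ⟨d, q⟩ := by
  induction q using Quotient.inductionOn' with | h c =>
  show toProd H K g ⟨d, ((x * c : G) : G ⧸ L H K g d)⟩
    = x • toProd H K g ⟨d, (c : G ⧸ L H K g d)⟩
  rw [toProd_mk, toProd_mk]
  show (((x * c : G) : G ⧸ H), ((x * c * g d : G) : G ⧸ K))
    = (((x * c : G) : G ⧸ H), ((x * (c * g d) : G) : G ⧸ K))
  rw [mul_assoc]

/-- `toProd` as an isomorphism of `G`-actions. -/
noncomputable def sigIso (hg : ∀ d, DoubleCoset.mk H K (g d) = d) :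
    sigAction G H K g ≅ Action.ofMulAction G ((G ⧸ H) × (G ⧸ K)) :=
  Action.mkIso (Equiv.toIso (Equiv.ofBijective _ (toProd_bijective H K g hg)))
    (fun x => by ext p; exact toProd_comm H K g x p.1 p.2)

/-- The cofan exhibiting `sigAction` as the coproduct. -/
def sigCofan : Cofan (fun d : DoubleCoset.Quotient (H : Set G) (K : Set G) =>
    Action.ofMulAction G (G ⧸ L H K g d)) :=
  Cofan.mk (sigAction G H K g)
    (fun d => { hom := TypeCat.ofHom fun q => ⟨d, q⟩, comm := fun x => rfl })

/-- The cofan is colimit. -/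
noncomputable def sigCofanIsColimit : IsColimit (sigCofan H K g) := by
  apply isColimitOfReflects (Action.forget (Type u) (MonCat.of G))
  exact
    { desc := fun s => TypeCat.ofHom fun (p : (d : DoubleCoset.Quotient (H : Set G) (K : Set G)) × (G ⧸ L H K g d)) => s.ι.app ⟨p.1⟩ p.2
      fac := fun s => by rintro ⟨d⟩; rfl
      uniq := fun s m hm => by ext p; exact types_congr_hom (hm ⟨p.1⟩) p.2 }

end CategoryPart

section RepPart

variable (R : Type u) [CommRing R]

/-- Tensor in `Action (Type u)` agrees with the product action. -/
noncomputable def prodIso :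
    Action.ofMulAction G (G ⧸ H) ⊗ Action.ofMulAction G (G ⧸ K) ≅
      Action.ofMulAction G ((G ⧸ H) × (G ⧸ K)) :=
  Action.mkIso (Iso.refl _) (fun x => rfl)

noncomputable instance : PreservesColimitsOfSize.{u, u} (Rep.linearization.{u, u} R G) :=
  have hF := Action.preservesColimitsOfSize_of_preserves.{u, u} (Rep.linearization.{u, u} R G ⋙ Rep.RepToAction R G) (by
    have : PreservesColimitsOfSize.{u, u} (ModuleCat.free R) :=
      (ModuleCat.adj R).leftAdjoint_preservesColimits
    have h1 : PreservesColimitsOfSize.{u, u}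
        (Action.forget (Type u) (MonCat.of G) ⋙ ModuleCat.free R) := inferInstance
    exact preservesColimits_of_natIso
      (F := Action.forget (Type u) (MonCat.of G) ⋙ ModuleCat.free R)
      (NatIso.ofComponents (fun X => (MonoidAlgebra.coeffLinearEquiv R).symm.toModuleIso)
        (fun f => ModuleCat.free_hom_ext (fun x => by simp [ModuleCat.freeMk]; rfl)) :
        Action.forget (Type u) (MonCat.of G) ⋙ ModuleCat.free R ≅
          (Rep.linearization R G ⋙ Rep.RepToAction R G) ⋙ Action.forget (ModuleCat R) G))
  preservesColimits_of_reflects_of_preserves _ (Rep.RepToAction R G)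

/-- The Mackey isomorphism. -/
noncomputable def mackeyIso (hg : ∀ d, DoubleCoset.mk H K (g d) = d) :
    Rep.ofMulAction R G (G ⧸ H) ⊗ Rep.ofMulAction R G (G ⧸ K) ≅
      ∐ fun d : DoubleCoset.Quotient (H : Set G) (K : Set G) =>
        Rep.ofMulAction R G (G ⧸ L H K g d) :=
  (MonoidalCategory.tensorIso (Rep.linearizationOfMulActionIso R G (G ⧸ H))
      (Rep.linearizationOfMulActionIso R G (G ⧸ K))).symm ≪≫
    Functor.Monoidal.μIso (Rep.linearization R G) _ _ ≪≫
    (Rep.linearization R G).mapIso (prodIso H K) ≪≫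
    (Rep.linearization R G).mapIso (sigIso H K g hg).symm ≪≫
    (isColimitOfPreserves (Rep.linearization R G)
      (sigCofanIsColimit H K g)).coconePointUniqueUpToIso (colimit.isColimit _) ≪≫
    HasColimit.isoOfNatIso
      (Discrete.natIso (fun d => Rep.linearizationOfMulActionIso R G (G ⧸ L H K g d.as)))

end RepPart

end MackeyAux

/-- (Mackey formula for permutation modules) Let `R` be a commutative ring, `G` a group and
`H`, `K` subgroups of `G`. Choose for every double coset `d ∈ H\G/K` a representative
`g d ∈ G`. Then there is an isomorphism in `Rep R G`:
`R[G/H] ⊗ R[G/K] ≅ ⊕_{d ∈ H\G/K} R[G/(H ∩ g d K (g d)⁻¹)]`. -/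
theorem mackey_formula_for_permutation_modules (R : Type u) [CommRing R]
    (G : Type u) [Group G] (H K : Subgroup G)
    (g : DoubleCoset.Quotient (H : Set G) (K : Set G) → G)
    (hg : ∀ d, DoubleCoset.mk H K (g d) = d) :
    Nonempty (Rep.ofMulAction R G (G ⧸ H) ⊗ Rep.ofMulAction R G (G ⧸ K) ≅
      ∐ fun d : DoubleCoset.Quotient (H : Set G) (K : Set G) =>
        Rep.ofMulAction R G (G ⧸ (H ⊓ Subgroup.map (MulAut.conj (g d)).toMonoidHom K))) := by
  exact ⟨MackeyAux.mackeyIso H K g R hg⟩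
end

section
/- Let f : R → S be a surjective homomorphism of commutative rings, G a finite group, and X, Y finite G-sets. Then base change is full on permutation modules: for every morphism φ : S[X] → S[Y] in Rep S G there exists a morphism ψ : R[X] → R[Y] in Rep R G such that for every x ∈ X, φ(e_x) equals the image of ψ(e_x) under the coefficientwise map R[Y] → S[Y] induced by f (i.e., applying f to each coefficient). -/
open CategoryTheory

universe u

private lemma exists_equivariant_lift {R S : Type u} [CommRing R] [CommRing S]
    (f : R →+* S) (hf : Function.Surjective f)
    (G : Type u) [Group G] (X Y : Type u) [MulAction G X] [MulAction G Y]
    (c : X → Y → S) (hcinv : ∀ (g : G) (x : X) (y : Y), c (g • x) (g • y) = c x y) :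
    ∃ d : X → Y → R, (∀ (g : G) (x : X) (y : Y), d (g • x) (g • y) = d x y) ∧
      ∀ x y, f (d x y) = c x y := by
  have hlift : ∀ (p q : X × Y), (MulAction.orbitRel G (X × Y)).r p q →
      c p.1 p.2 = c q.1 q.2 := by
    intro p q hpq
    obtain ⟨g, hg⟩ := hpq
    have hg' : g • q = p := hg
    rw [← hg']
    exact hcinv g q.1 q.2
  refine ⟨fun x y => Function.surjInv hf
    (Quotient.lift (fun p : X × Y => c p.1 p.2) hlift ⟦(x, y)⟧), ?_, ?_⟩
  · intro g x y
    have : (⟦((g • x : X), (g • y : Y))⟧ : Quotient (MulAction.orbitRel G (X × Y)))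
        = ⟦(x, y)⟧ := Quotient.sound ⟨g, rfl⟩
    dsimp only
    rw [this]
  · intro x y
    exact Function.surjInv_eq hf _

/-- Let `f : R → S` be a surjective homomorphism of commutative rings, `G` a finite group and
`X`, `Y` finite `G`-sets. Then base change is full on permutation modules: every morphism
`φ : S[X] ⟶ S[Y]` in `Rep S G` is the coefficientwise image of some morphism
`ψ : R[X] ⟶ R[Y]` in `Rep R G`. -/
theorem baseChange_full_on_permutation_modules
    (R S : Type u) [CommRing R] [CommRing S] (f : R →+* S) (hf : Function.Surjective f)
    (G : Type u) [Group G] [Finite G]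
    (X Y : Type u) [Finite X] [Finite Y] [MulAction G X] [MulAction G Y]
    (φ : Rep.ofMulAction S G X ⟶ Rep.ofMulAction S G Y) :
    ∃ ψ : Rep.ofMulAction R G X ⟶ Rep.ofMulAction R G Y,
      ∀ x : X, MonoidAlgebra.coeff (φ.hom (MonoidAlgebra.single x (1 : S))) =
        Finsupp.mapRange f f.map_zero (MonoidAlgebra.coeff (ψ.hom (MonoidAlgebra.single x (1 : R)))) := by
  classical
  haveI : Fintype Y := Fintype.ofFinite Y
  -- coefficients of φ
  have hcinv : ∀ (g : G) (x : X) (y : Y),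
      MonoidAlgebra.coeff (φ.hom (MonoidAlgebra.single (g • x) (1 : S))) (g • y)
        = MonoidAlgebra.coeff (φ.hom (MonoidAlgebra.single x (1 : S))) y := by
    intro g x y
    have h1 : (MonoidAlgebra.single (g • x) (1 : S))
        = (Rep.ofMulAction S G X).ρ g (MonoidAlgebra.single x (1 : S)) :=
      (Representation.ofMulAction_single (k := S) (G := G) (H := X) g x 1).symm
    rw [h1, Rep.hom_comm_apply]
    show MonoidAlgebra.coeff (Representation.ofMulAction S G Y g (φ.hom (MonoidAlgebra.single x 1))) (g • y) = _
    rw [Representation.coeff_ofMulAction, inv_smul_smul]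
  obtain ⟨d, hdinv, hfd⟩ := exists_equivariant_lift f hf G X Y
    (fun x y => MonoidAlgebra.coeff (φ.hom (MonoidAlgebra.single x (1 : S))) y) hcinv
  -- the lifted map
  set ℓ : X → (Y →₀ R) := fun x => Finsupp.equivFunOnFinite.symm (d x) with hℓ
  set ψhom : MonoidAlgebra R X →ₗ[R] MonoidAlgebra R Y :=
    (MonoidAlgebra.coeffLinearEquiv R).symm.toLinearMap ∘ₗ Finsupp.lift (Y →₀ R) R X ℓ ∘ₗ
      (MonoidAlgebra.coeffLinearEquiv R).toLinearMap with hψhom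
  have hψsingle : ∀ x : X, MonoidAlgebra.coeff (ψhom (MonoidAlgebra.single x (1 : R))) = ℓ x := by
    intro x
    rw [hψhom]
    simp [Finsupp.lift_apply, Finsupp.sum_single_index]
  have hℓapp : ∀ x y, ℓ x y = d x y := fun x y => rfl
  have hcomm : ∀ g : G,
      (ψhom ∘ₗ (Representation.ofMulAction R G X g))
        = ((Representation.ofMulAction R G Y g) ∘ₗ ψhom) := by
    intro g
    refine MonoidAlgebra.lhom_ext' (fun x => LinearMap.ext_ring ?_)
    simp only [LinearMap.comp_apply, MonoidAlgebra.lsingle_apply]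
    have h1 : Representation.ofMulAction R G X (g : G) (MonoidAlgebra.single x (1 : R))
        = MonoidAlgebra.single ((g : G) • x) (1 : R) :=
      Representation.ofMulAction_single (k := R) (G := G) (H := X) (g : G) x 1
    rw [h1]
    apply MonoidAlgebra.ext
    ext y
    rw [Representation.coeff_ofMulAction, hψsingle, hψsingle, hℓapp, hℓapp]
    rw [← hdinv (g : G) x ((g : G)⁻¹ • y), smul_inv_smul]
  refine ⟨Rep.ofHom ⟨ψhom, fun g => hcomm g⟩, ?_⟩
  · intro x
    refine Finsupp.ext fun y => ?_
    rw [Finsupp.mapRange_apply]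
    show MonoidAlgebra.coeff (φ.hom (MonoidAlgebra.single x (1 : S))) y
      = f (MonoidAlgebra.coeff (ψhom (MonoidAlgebra.single x (1 : R))) y)
    rw [hψsingle x, hℓapp, hfd]
end
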